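/- Let d ≥ 1 and let j : (0,∞) → [0,∞) be nonincreasing with ∫_{ℝ^d} min{1,|x|²} j(|x|) dx < ∞, and suppose there exist δ ∈ (0,1) and 0 < c₁ ≤ c₂ with c₁·r^{−d−2}·(log(1/r))^{−2} ≤ j(r) ≤ c₂·r^{−d−2}·(log(1/r))^{−2} for all r ∈ (0, δ]. Then there exist constants 0 < a₁ ≤ a₂, 0 < b₁ ≤ b₂ and r₀ ∈ (0, δ) such that for all r ∈ (0, r₀]: a₁·(log(1/r))^{−1} ≤ m₂(r) ≤ a₂·(log(1/r))^{−1} and b₁·r^{−2}·(log(1/r))^{−2} ≤ λ(r) ≤ b₂·r^{−2}·(log(1/r))^{−2}. -/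

import Mathlib

open MeasureTheory Metric ENNReal Set

open Module in
lemma my_polar {E : Type*} [NormedAddCommGroup E] [NormedSpace ℝ E] [MeasurableSpace E]
    [Nontrivial E] (μ : Measure E) [FiniteDimensional ℝ E] [BorelSpace E] [μ.IsAddHaarMeasure]
    (f : ℝ → ℝ≥0∞) (hf : Measurable f) :
    ∫⁻ x, f ‖x‖ ∂μ = (finrank ℝ E) * μ (ball 0 1) *
      ∫⁻ y in Ioi (0 : ℝ), ENNReal.ofReal (y ^ (finrank ℝ E - 1)) * f y := by
  have hm2 : Measurable fun p : sphere (0:E) 1 × Ioi (0:ℝ) => f ↑p.2 := by fun_prop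
  have hm3 : Measurable fun y : Ioi (0:ℝ) => f ↑y := by fun_prop
  calc
    ∫⁻ x, f ‖x‖ ∂μ = ∫⁻ x : ({(0 : E)}ᶜ : Set E), f ‖x.1‖ ∂(μ.comap (↑)) := by
      rw [lintegral_subtype_comap (measurableSet_singleton _).compl (fun x : E => f ‖x‖),
        MeasureTheory.restrict_compl_singleton]
    _ = ∫⁻ p : sphere (0 : E) 1 × Ioi (0 : ℝ), f p.2
        ∂(μ.toSphere.prod (.volumeIoiPow (finrank ℝ E - 1))) := by
      rw [← μ.measurePreserving_homeomorphUnitSphereProd.map_eq, lintegral_map hm2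
          (Homeomorph.measurable _)]
      simp
    _ = μ.toSphere univ * ∫⁻ y : Ioi (0:ℝ), f y ∂(Measure.volumeIoiPow (finrank ℝ E - 1)) := by
      rw [lintegral_prod (fun p : sphere (0:E) 1 × Ioi (0:ℝ) => f ↑p.2) hm2.aemeasurable]
      simp [lintegral_const, mul_comm]
    _ = _ := by
      rw [Measure.toSphere_apply_univ, Measure.volumeIoiPow,
        lintegral_withDensity_eq_lintegral_mul _
          (by exact (measurable_subtype_coe.pow_const _).ennreal_ofReal) hm3,
        ← lintegral_subtype_comap measurableSet_Ioi
          (fun y : ℝ => ENNReal.ofReal (y ^ (finrank ℝ E - 1)) * f y)]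
      rfl

lemma lemA {a b : ℝ} (ha : 0 < a) (hab : a < b) (hb : b < 1) :
    ∫⁻ y in Ioc a b, ENNReal.ofReal ((y * Real.log y ^ 2)⁻¹)
      = ENNReal.ofReal ((-Real.log b)⁻¹ - (-Real.log a)⁻¹) := by
  have hsub : Icc a b ⊆ {x : ℝ | x ≠ 0} := fun y hy => (ha.trans_le hy.1).ne'
  have hderiv : ∀ y ∈ Icc a b,
      HasDerivAt (fun t => -(Real.log t)⁻¹) ((y * Real.log y ^ 2)⁻¹) y := by
    intro y hy
    have hy0 : 0 < y := ha.trans_le hy.1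
    have hy1 : y < 1 := lt_of_le_of_lt hy.2 hb
    have hlog : Real.log y ≠ 0 := ne_of_lt (Real.log_neg hy0 hy1)
    have h2 := ((Real.hasDerivAt_log hy0.ne').inv hlog).neg
    refine h2.congr_deriv ?_
    field_simp
  have hcont : ContinuousOn (fun y : ℝ => (y * Real.log y ^ 2)⁻¹) (Icc a b) := by
    apply ContinuousOn.inv₀
    · exact continuousOn_id.mul ((Real.continuousOn_log.mono hsub).pow 2)
    · intro y hy
      have hy0 : 0 < y := ha.trans_le hy.1
      have hy1 : y < 1 := lt_of_le_of_lt hy.2 hb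
      have hlog : Real.log y ≠ 0 := ne_of_lt (Real.log_neg hy0 hy1)
      positivity
  have hInt : IntervalIntegrable (fun y : ℝ => (y * Real.log y ^ 2)⁻¹) volume a b := by
    apply ContinuousOn.intervalIntegrable
    rwa [uIcc_of_le hab.le]
  have hFTC := intervalIntegral.integral_eq_sub_of_hasDerivAt
    (fun y hy => hderiv y (by rwa [uIcc_of_le hab.le] at hy)) hInt
  rw [← ofReal_integral_eq_lintegral_ofReal hInt.1 ?_]
  · rw [← intervalIntegral.integral_of_le hab.le, hFTC]
    congr 1
    simp [inv_neg]
  · filter_upwards [ae_restrict_mem measurableSet_Ioc] with y hy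
    have hy0 : 0 < y := ha.trans hy.1
    positivity

lemma lemA_sup {r : ℝ} (hr : 0 < r) (hr1 : r < 1) :
    ∫⁻ y in Ioo (0:ℝ) r, ENNReal.ofReal ((y * Real.log y ^ 2)⁻¹)
      ≤ ENNReal.ofReal ((-Real.log r)⁻¹) := by
  set F : ℝ → ℝ≥0∞ := fun y => ENNReal.ofReal ((y * Real.log y ^ 2)⁻¹) with hF
  have hmeas : Measurable F := by
    apply Measurable.ennreal_ofReal
    exact ((measurable_id.mul (Real.measurable_log.pow_const 2)).inv)
  have hwd : ∀ s : Set ℝ, MeasurableSet s →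
      ∫⁻ y in s, F y = (volume.withDensity F) s := fun s hs =>
    (withDensity_apply F hs).symm
  have hunion : Ioo (0:ℝ) r = ⋃ n : ℕ, Ioo (r / (n + 2)) r := by
    ext y
    simp only [mem_Ioo, mem_iUnion]
    constructor
    · rintro ⟨hy0, hyr⟩
      obtain ⟨n, hn⟩ := exists_nat_gt (r / y)
      refine ⟨n, ?_, hyr⟩
      rw [div_lt_iff₀ (by positivity)]
      rw [div_lt_iff₀ hy0] at hn
      nlinarith
    · rintro ⟨n, hn, hyr⟩
      exact ⟨lt_trans (by positivity) hn, hyr⟩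
  have hdir : Directed (· ⊆ ·) (fun n : ℕ => Ioo (r / (n + 2)) r) := by
    intro m n
    refine ⟨max m n, Ioo_subset_Ioo ?_ le_rfl, Ioo_subset_Ioo ?_ le_rfl⟩ <;>
      apply div_le_div_of_nonneg_left hr.le (by positivity) <;> push_cast <;>
      simp [add_le_add_iff_right]
  rw [hwd _ measurableSet_Ioo, hunion, Directed.measure_iUnion hdir]
  apply iSup_le
  intro n
  have han : 0 < r / (n + 2) := by positivity
  have hanr : r / (n + 2) < r := by
    rw [div_lt_iff₀ (by positivity)]; nlinarith
  rw [← hwd _ measurableSet_Ioo, Measure.restrict_congr_set Ioo_ae_eq_Ioc,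
    lemA han hanr hr1]
  apply ENNReal.ofReal_le_ofReal
  have : 0 < -Real.log (r / (n+2)) := by
    simp only [neg_pos]
    exact Real.log_neg han (hanr.trans hr1)
  nlinarith [inv_pos.mpr this]

lemma lemB {r b : ℝ} (hr : 0 < r) (hrb : r < b) (hb : b ≤ Real.exp (-2)) :
    ENNReal.ofReal ((((r * Real.log r) ^ 2)⁻¹ - ((b * Real.log b) ^ 2)⁻¹) / 2)
        ≤ ∫⁻ y in Ioc r b, ENNReal.ofReal ((y ^ 3 * Real.log y ^ 2)⁻¹) ∧
      ∫⁻ y in Ioc r b, ENNReal.ofReal ((y ^ 3 * Real.log y ^ 2)⁻¹)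
        ≤ ENNReal.ofReal (((r * Real.log r) ^ 2)⁻¹) := by
  have hb1 : b < 1 := lt_of_le_of_lt hb (by
    rw [← Real.exp_zero]; exact Real.exp_lt_exp.mpr (by norm_num))
  have hfacts : ∀ y ∈ Icc r b, 0 < y ∧ Real.log y ≤ -2 := by
    intro y hy
    have hy0 : 0 < y := hr.trans_le hy.1
    refine ⟨hy0, ?_⟩
    calc Real.log y ≤ Real.log (Real.exp (-2)) :=
          Real.log_le_log hy0 (hy.2.trans hb)
      _ = -2 := Real.log_exp _
  set h : ℝ → ℝ := fun y => (y ^ 3 * Real.log y ^ 2)⁻¹ with hh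
  set negG' : ℝ → ℝ := fun y => 2 * (Real.log y + 1) / (y * Real.log y) ^ 3 with hG'
  set G : ℝ → ℝ := fun y => ((y * Real.log y) ^ 2)⁻¹ with hG
  have hderiv : ∀ y ∈ Icc r b, HasDerivAt (fun t => -G t) (negG' y) y := by
    intro y hy
    obtain ⟨hy0, hyl⟩ := hfacts y hy
    have hlog : Real.log y ≠ 0 := by nlinarith
    have hv : HasDerivAt (fun t : ℝ => t * Real.log t) (Real.log y + 1) y := by
      have := (hasDerivAt_id y).mul (Real.hasDerivAt_log hy0.ne')
      refine this.congr_deriv ?_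
      simp only [id, one_mul, mul_inv_cancel₀ hy0.ne']
    have hu : HasDerivAt (fun t : ℝ => (t * Real.log t) ^ 2)
        (2 * (y * Real.log y) * (Real.log y + 1)) y := by
      have := hv.pow 2
      refine this.congr_deriv ?_
      ring
    have hvne : y * Real.log y ≠ 0 := mul_ne_zero hy0.ne' hlog
    have := (hu.inv (pow_ne_zero 2 hvne)).neg
    refine this.congr_deriv ?_
    rw [hG']
    field_simp
  have hcomp : ∀ y ∈ Icc r b, h y ≤ negG' y ∧ negG' y ≤ 2 * h y := by
    intro y hy
    obtain ⟨hy0, hyl⟩ := hfacts y hy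
    set P : ℝ := -Real.log y with hP
    have hP2 : 2 ≤ P := by simp [hP]; linarith
    have hP0 : 0 < P := by linarith
    have hGP : negG' y = 2 * (P - 1) / (y ^ 3 * P ^ 3) := by
      simp only [hG', hP]
      rw [show Real.log y = -P by simp [hP]]
      field_simp
      ring
    have hyne : y ≠ 0 := hy0.ne'
    have hPne : P ≠ 0 := hP0.ne'
    have hhP : h y = 1 / (y ^ 3 * P ^ 2) := by
      simp only [hh]
      rw [one_div, show P ^ 2 = Real.log y ^ 2 by rw [hP]; ring]
    constructor
    · rw [hGP, hhP, div_le_div_iff₀ (by positivity) (by positivity)]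
      have key : (0:ℝ) ≤ (P - 2) * (y ^ 3 * P ^ 2) :=
        mul_nonneg (by linarith) (by positivity)
      nlinarith [key]
    · rw [hGP, hhP, ← sub_nonneg]
      have hid : 2 * (1 / (y ^ 3 * P ^ 2)) - 2 * (P - 1) / (y ^ 3 * P ^ 3)
          = 2 / (y ^ 3 * P ^ 3) := by
        field_simp
        ring
      rw [hid]
      positivity
  have hconth : ContinuousOn h (Icc r b) := by
    apply ContinuousOn.inv₀
    · exact ((continuousOn_id.pow 3).mul ((Real.continuousOn_log.mono
        (fun y hy => (hfacts y hy).1.ne')).pow 2))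
    · intro y hy
      obtain ⟨hy0, hyl⟩ := hfacts y hy
      have hlog : Real.log y ≠ 0 := by nlinarith
      positivity
  have hcontG : ContinuousOn negG' (Icc r b) := by
    apply ContinuousOn.div
    · exact (continuousOn_const.mul ((Real.continuousOn_log.mono
        (fun y hy => (hfacts y hy).1.ne')).add continuousOn_const))
    · exact ((continuousOn_id.mul (Real.continuousOn_log.mono
        (fun y hy => (hfacts y hy).1.ne'))).pow 3)
    · intro y hy
      obtain ⟨hy0, hyl⟩ := hfacts y hy
      have hlog : Real.log y ≠ 0 := by nlinarith
      positivity
  have hInth : IntervalIntegrable h volume r b := by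
    apply ContinuousOn.intervalIntegrable; rwa [uIcc_of_le hrb.le]
  have hIntG : IntervalIntegrable negG' volume r b := by
    apply ContinuousOn.intervalIntegrable; rwa [uIcc_of_le hrb.le]
  have hFTC : ∫ y in r..b, negG' y = G r - G b := by
    rw [intervalIntegral.integral_eq_sub_of_hasDerivAt
      (fun y hy => hderiv y (by rwa [uIcc_of_le hrb.le] at hy)) hIntG]
    ring
  have hmono1 : ∫ y in r..b, h y ≤ G r - G b := by
    rw [← hFTC]
    apply intervalIntegral.integral_mono_on hrb.le hInth hIntG
    intro y hy; exact (hcomp y hy).1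
  have hmono2 : (G r - G b) / 2 ≤ ∫ y in r..b, h y := by
    have h2 : ∫ y in r..b, negG' y ≤ ∫ y in r..b, 2 * h y :=
      intervalIntegral.integral_mono_on hrb.le hIntG (hInth.const_mul 2)
        (fun y hy => (hcomp y hy).2)
    rw [intervalIntegral.integral_const_mul] at h2
    rw [hFTC] at h2
    linarith
  have hlint : ∫⁻ y in Ioc r b, ENNReal.ofReal (h y) = ENNReal.ofReal (∫ y in r..b, h y) := by
    rw [← ofReal_integral_eq_lintegral_ofReal hInth.1 ?_,
      intervalIntegral.integral_of_le hrb.le]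
    filter_upwards [ae_restrict_mem measurableSet_Ioc] with y hy
    have hy0 : 0 < y := hr.trans hy.1
    positivity
  have hGb : 0 ≤ G b := by positivity
  constructor
  · rw [hlint]
    exact ENNReal.ofReal_le_ofReal (by simpa [hG] using hmono2)
  · rw [hlint]
    apply ENNReal.ofReal_le_ofReal
    simp only [hG] at hmono1 ⊢
    linarith

lemma red (d : ℕ) (hd : 1 ≤ d) (g : ℝ → ℝ≥0∞) (hg : Measurable g) (s : Set ℝ)
    (hs : MeasurableSet s) (hs0 : s ⊆ Ioi 0) :
    ∫⁻ x : EuclideanSpace ℝ (Fin d), s.indicator g ‖x‖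
      = (d : ℝ≥0∞) * volume (ball (0 : EuclideanSpace ℝ (Fin d)) 1) *
        ∫⁻ y in s, ENNReal.ofReal (y ^ (d - 1)) * g y := by
  haveI : Nontrivial (EuclideanSpace ℝ (Fin d)) := by
    apply Module.finrank_pos_iff (R := ℝ).mp
    rw [finrank_euclideanSpace_fin]
    omega
  rw [my_polar volume _ (hg.indicator hs), finrank_euclideanSpace_fin]
  congr 1
  calc ∫⁻ y in Ioi (0:ℝ), ENNReal.ofReal (y ^ (d - 1)) * s.indicator g y
      = ∫⁻ y in Ioi (0:ℝ), s.indicator (fun y => ENNReal.ofReal (y ^ (d - 1)) * g y) y := by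
        apply lintegral_congr
        intro y
        by_cases hy : y ∈ s <;> simp [hy]
    _ = ∫⁻ y in s, ENNReal.ofReal (y ^ (d - 1)) * g y := by
        rw [lintegral_indicator hs, Measure.restrict_restrict hs,
          inter_eq_left.mpr hs0]

/-- Truncated second moment `m₂(r) = ∫_{B(0,r)} |x|² j(|x|) dx` in `ℝ^d`. -/
noncomputable def m2 (d : ℕ) (j : ℝ → ℝ) (r : ℝ) : ℝ≥0∞ :=
  ∫⁻ x in Metric.ball (0 : EuclideanSpace ℝ (Fin d)) r,
    ENNReal.ofReal (‖x‖ ^ 2 * j ‖x‖)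

/-- Tail `λ(r) = ∫_{ℝ^d ∖ B(0,r)} j(|x|) dx` in `ℝ^d`. -/
noncomputable def tailLam (d : ℕ) (j : ℝ → ℝ) (r : ℝ) : ℝ≥0∞ :=
  ∫⁻ x in (Metric.ball (0 : EuclideanSpace ℝ (Fin d)) r)ᶜ,
    ENNReal.ofReal (j ‖x‖)


set_option maxHeartbeats 1000000 in
theorem stmt15 (d : ℕ) (hd : 1 ≤ d) (j : ℝ → ℝ)
    (hnonneg : ∀ r : ℝ, 0 < r → 0 ≤ j r)
    (hmono : AntitoneOn j (Set.Ioi (0 : ℝ)))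
    (hLK : (∫⁻ x : EuclideanSpace ℝ (Fin d),
      ENNReal.ofReal (min 1 (‖x‖ ^ 2) * j ‖x‖)) < ⊤)
    (δ c₁ c₂ : ℝ) (hδ0 : 0 < δ) (hδ1 : δ < 1) (hc₁ : 0 < c₁) (hc : c₁ ≤ c₂)
    (hjbound : ∀ r : ℝ, 0 < r → r ≤ δ →
      c₁ * (r ^ (d + 2))⁻¹ * (Real.log (1 / r) ^ 2)⁻¹ ≤ j r ∧
      j r ≤ c₂ * (r ^ (d + 2))⁻¹ * (Real.log (1 / r) ^ 2)⁻¹) :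
    ∃ a₁ a₂ b₁ b₂ r₀ : ℝ, 0 < a₁ ∧ a₁ ≤ a₂ ∧ 0 < b₁ ∧ b₁ ≤ b₂ ∧ 0 < r₀ ∧ r₀ < δ ∧
      ∀ r : ℝ, 0 < r → r ≤ r₀ →
        (ENNReal.ofReal (a₁ * (Real.log (1 / r))⁻¹) ≤ m2 d j r ∧
          m2 d j r ≤ ENNReal.ofReal (a₂ * (Real.log (1 / r))⁻¹)) ∧
        (ENNReal.ofReal (b₁ * (r ^ 2)⁻¹ * (Real.log (1 / r) ^ 2)⁻¹) ≤ tailLam d j r ∧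
          tailLam d j r ≤ ENNReal.ofReal (b₂ * (r ^ 2)⁻¹ * (Real.log (1 / r) ^ 2)⁻¹)) := by
  have hc₂0 : 0 ≤ c₂ := hc₁.le.trans hc
  -- the small radius δ₁ and constants
  set δ₁ : ℝ := min δ (Real.exp (-2)) with hδ₁def
  have he2 : Real.exp (-2) < 1 := by
    rw [← Real.exp_zero]; exact Real.exp_lt_exp.mpr (by norm_num)
  have hδ₁0 : 0 < δ₁ := lt_min hδ0 (Real.exp_pos _)
  have hδ₁δ : δ₁ ≤ δ := min_le_left _ _
  have hδ₁e : δ₁ ≤ Real.exp (-2) := min_le_right _ _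
  have hδ₁1 : δ₁ < 1 := lt_of_le_of_lt hδ₁e he2
  set Gδ : ℝ := ((δ₁ * Real.log δ₁) ^ 2)⁻¹ with hGδdef
  have hGδ0 : 0 ≤ Gδ := by positivity
  set r₀ : ℝ := min (δ₁ / 2) (1 / (8 * Gδ + 1)) with hr₀def
  have hr₀0 : 0 < r₀ := lt_min (by positivity) (by positivity)
  have hr₀δ : r₀ < δ := lt_of_le_of_lt (min_le_left _ _)
    (lt_of_lt_of_le (by linarith) hδ₁δ)
  -- the Haar constant
  set κ : ℝ≥0∞ := (d : ℝ≥0∞) * volume (ball (0 : EuclideanSpace ℝ (Fin d)) 1) with hκdef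
  have hκ0 : κ ≠ 0 := by
    apply mul_ne_zero
    · exact_mod_cast Nat.cast_ne_zero.mpr (by omega)
    · exact (measure_ball_pos _ _ one_pos).ne'
  have hκtop : κ ≠ ⊤ := ENNReal.mul_ne_top (ENNReal.natCast_ne_top _) measure_ball_lt_top.ne
  set K : ℝ := κ.toReal with hKdef
  have hK : 0 < K := ENNReal.toReal_pos hκ0 hκtop
  have hκK : κ = ENNReal.ofReal K := (ENNReal.ofReal_toReal hκtop).symm
  -- the far-tail constant
  set M : ℝ≥0∞ := ENNReal.ofReal ((min 1 (δ₁ ^ 2))⁻¹) *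
    (∫⁻ x : EuclideanSpace ℝ (Fin d), ENNReal.ofReal (min 1 (‖x‖ ^ 2) * j ‖x‖)) with hMdef
  have hMtop : M ≠ ⊤ := ENNReal.mul_ne_top ENNReal.ofReal_ne_top hLK.ne
  set C : ℝ := M.toReal with hCdef
  have hC0 : 0 ≤ C := ENNReal.toReal_nonneg
  have hMC : M = ENNReal.ofReal C := (ENNReal.ofReal_toReal hMtop).symm
  -- measurable 1D comparison functions
  have hFmeas : Measurable (fun y : ℝ => ENNReal.ofReal ((y * Real.log y ^ 2)⁻¹)) :=
    ((measurable_id.mul (Real.measurable_log.pow_const 2)).inv).ennreal_ofReal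
  have hHmeas : Measurable (fun y : ℝ => ENNReal.ofReal ((y ^ 3 * Real.log y ^ 2)⁻¹)) :=
    (((measurable_id.pow_const 3).mul (Real.measurable_log.pow_const 2)).inv).ennreal_ofReal
  have hgtmeas : ∀ c : ℝ, Measurable (fun y : ℝ =>
      ENNReal.ofReal (c * (y ^ (d + 2))⁻¹ * (Real.log (1 / y) ^ 2)⁻¹)) := by
    intro c
    apply Measurable.ennreal_ofReal
    exact ((measurable_const.mul (measurable_id.pow_const _).inv).mul
      ((Real.measurable_log.comp (measurable_const.div measurable_id)).pow_const 2).inv)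
  have hgmmeas : ∀ c : ℝ, Measurable (fun y : ℝ =>
      ENNReal.ofReal (y ^ 2 * (c * (y ^ (d + 2))⁻¹ * (Real.log (1 / y) ^ 2)⁻¹))) := by
    intro c
    apply Measurable.ennreal_ofReal
    exact (measurable_id.pow_const 2).mul
      ((measurable_const.mul (measurable_id.pow_const _).inv).mul
      ((Real.measurable_log.comp (measurable_const.div measurable_id)).pow_const 2).inv)
  -- pointwise 1D identities
  have hpt2 : ∀ c : ℝ, 0 ≤ c → ∀ y : ℝ, 0 < y → y < 1 →
      ENNReal.ofReal (y ^ (d - 1)) *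
        ENNReal.ofReal (y ^ 2 * (c * (y ^ (d + 2))⁻¹ * (Real.log (1 / y) ^ 2)⁻¹))
      = ENNReal.ofReal c * ENNReal.ofReal ((y * Real.log y ^ 2)⁻¹) := by
    intro c hcn y hy hy1
    rw [← ENNReal.ofReal_mul (pow_nonneg hy.le _), ← ENNReal.ofReal_mul hcn]
    congr 1
    have hlogne : Real.log y ≠ 0 := (Real.log_neg hy hy1).ne
    have hlog1 : Real.log (1 / y) = -Real.log y := by rw [one_div, Real.log_inv]
    obtain ⟨e, rfl⟩ : ∃ e, d = e + 1 := ⟨d - 1, by omega⟩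
    simp only [Nat.add_sub_cancel]
    rw [hlog1, neg_sq]
    field_simp
    ring
  have hptt : ∀ c : ℝ, 0 ≤ c → ∀ y : ℝ, 0 < y → y < 1 →
      ENNReal.ofReal (y ^ (d - 1)) *
        ENNReal.ofReal (c * (y ^ (d + 2))⁻¹ * (Real.log (1 / y) ^ 2)⁻¹)
      = ENNReal.ofReal c * ENNReal.ofReal ((y ^ 3 * Real.log y ^ 2)⁻¹) := by
    intro c hcn y hy hy1
    rw [← ENNReal.ofReal_mul (pow_nonneg hy.le _), ← ENNReal.ofReal_mul hcn]
    congr 1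
    have hlogne : Real.log y ≠ 0 := (Real.log_neg hy hy1).ne
    have hlog1 : Real.log (1 / y) = -Real.log y := by rw [one_div, Real.log_inv]
    obtain ⟨e, rfl⟩ : ∃ e, d = e + 1 := ⟨d - 1, by omega⟩
    simp only [Nat.add_sub_cancel]
    rw [hlog1, neg_sq]
    field_simp
    ring
  refine ⟨K * c₁ / 2, K * c₂, K * c₁ / 4, K * c₂ + C, r₀, by positivity, ?_, by positivity,
    ?_, hr₀0, hr₀δ, ?_⟩
  · have h := mul_le_mul_of_nonneg_left hc hK.le
    have h2 : 0 < K * c₁ := mul_pos hK hc₁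
    linarith
  · have h := mul_le_mul_of_nonneg_left hc hK.le
    have h2 : 0 < K * c₁ := mul_pos hK hc₁
    linarith
  intro r hr hrr₀
  -- basic facts about r
  have hrδ₁2 : r ≤ δ₁ / 2 := hrr₀.trans (min_le_left _ _)
  have hrδ₁ : r < δ₁ := lt_of_le_of_lt hrδ₁2 (by linarith)
  have hrδ : r ≤ δ := (hrδ₁.trans_le hδ₁δ).le
  have hr1 : r < 1 := hrδ₁.trans hδ₁1
  have hrG : r ≤ 1 / (8 * Gδ + 1) := hrr₀.trans (min_le_right _ _)
  have hlogr : Real.log r < 0 := Real.log_neg hr hr1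
  set P : ℝ := -Real.log r with hPdef
  have hP0 : 0 < P := by simp only [hPdef, neg_pos]; exact hlogr
  have hlog1r : Real.log (1 / r) = P := by rw [one_div, Real.log_inv]
  -- the key quantity G r
  set Gr : ℝ := ((r * Real.log r) ^ 2)⁻¹ with hGrdef
  have hGrpos : 0 < Gr := by
    rw [hGrdef]
    exact inv_pos.mpr (pow_two_pos_of_ne_zero (mul_ne_zero hr.ne' hlogr.ne))
  have hGrform : Gr = (r ^ 2)⁻¹ * (Real.log (1 / r) ^ 2)⁻¹ := by
    rw [hGrdef, hlog1r, mul_pow, mul_inv]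
    congr 2
    rw [hPdef]; ring
  -- Gr ≥ (4r)⁻¹
  have hsq0 : 0 < Real.sqrt r := Real.sqrt_pos.mpr hr
  have hsqr : Real.sqrt r ^ 2 = r := Real.sq_sqrt hr.le
  have hP2s : P ≤ 2 / Real.sqrt r := by
    have h1 : (1:ℝ) / r = (1 / Real.sqrt r) ^ 2 := by
      rw [div_pow, one_pow, hsqr]
    have h2 : Real.log (1 / r) = 2 * Real.log (1 / Real.sqrt r) := by
      rw [h1, Real.log_pow]; push_cast; ring
    have h3 : Real.log (1 / Real.sqrt r) ≤ 1 / Real.sqrt r - 1 :=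
      Real.log_le_sub_one_of_pos (by positivity)
    rw [← hlog1r, h2]
    have : (1:ℝ) / Real.sqrt r - 1 ≤ 1 / Real.sqrt r := by linarith
    calc 2 * Real.log (1 / Real.sqrt r) ≤ 2 * (1 / Real.sqrt r) := by linarith
      _ = 2 / Real.sqrt r := by ring
  have hrP4 : (r * P) ^ 2 ≤ 4 * r := by
    have h1 : r * P ≤ 2 * Real.sqrt r := by
      calc r * P ≤ r * (2 / Real.sqrt r) := mul_le_mul_of_nonneg_left hP2s hr.le
        _ = 2 * Real.sqrt r := by
            field_simp; linarith [hsqr]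
    have h2 : 0 ≤ r * P := mul_nonneg hr.le hP0.le
    have h3 : (r * P) ^ 2 ≤ (2 * Real.sqrt r) ^ 2 := by
      apply pow_le_pow_left₀ h2 h1
    calc (r * P) ^ 2 ≤ (2 * Real.sqrt r) ^ 2 := h3
      _ = 4 * (Real.sqrt r ^ 2) := by ring
      _ = 4 * r := by rw [hsqr]
  have hrlogsq : (r * Real.log r) ^ 2 = (r * P) ^ 2 := by rw [hPdef]; ring
  have hGr4 : (4 * r)⁻¹ ≤ Gr := by
    rw [hGrdef, hrlogsq]
    exact inv_anti₀ (by positivity : (0:ℝ) < (r * P) ^ 2) hrP4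
  -- Gr ≥ 1
  have hrP1 : r * P ≤ 1 := by
    have h3 : Real.log (1 / r) ≤ 1 / r - 1 := Real.log_le_sub_one_of_pos (by positivity)
    rw [hlog1r] at h3
    have : r * P ≤ r * (1 / r - 1) := mul_le_mul_of_nonneg_left h3 hr.le
    have h4 : r * (1 / r - 1) = 1 - r := by field_simp
    linarith [h4 ▸ this]
  have hGr1 : 1 ≤ Gr := by
    rw [hGrdef, hrlogsq]
    have h5 : (r * P) ^ 2 ≤ 1 := by
      have h6 : 0 ≤ r * P := mul_nonneg hr.le hP0.le
      calc (r * P) ^ 2 ≤ 1 ^ 2 := pow_le_pow_left₀ h6 hrP1 2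
        _ = 1 := one_pow 2
    calc (1:ℝ) = 1⁻¹ := by norm_num
      _ ≤ ((r * P) ^ 2)⁻¹ := inv_anti₀ (by positivity) h5
  -- Gδ ≤ Gr / 2
  have hGδGr : Gδ ≤ Gr / 2 := by
    have h1 : (4 * r)⁻¹ = 1 / (4 * r) := by rw [one_div]
    have h2 : r * (8 * Gδ + 1) ≤ 1 := (le_div_iff₀ (by positivity)).mp hrG
    have h3 : 2 * Gδ ≤ 1 / (4 * r) := by
      rw [le_div_iff₀ (by positivity)]
      calc 2 * Gδ * (4 * r) = r * (8 * Gδ) := by ring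
        _ ≤ 1 := by
            have h4 : 0 ≤ r := hr.le
            calc r * (8 * Gδ) ≤ r * (8 * Gδ) + r := le_add_of_nonneg_right h4
              _ = r * (8 * Gδ + 1) := by ring
              _ ≤ 1 := h2
    linarith [hGr4, h1 ▸ hGr4]
  -- κ * ofReal = ofReal
  have hκmul : ∀ u : ℝ, 0 ≤ u → κ * ENNReal.ofReal u = ENNReal.ofReal (K * u) := by
    intro u hu
    rw [hκK, ← ENNReal.ofReal_mul hK.le]
  ----------------------------------------------------------------
  -- m2 bounds
  ----------------------------------------------------------------
  constructor
  constructor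
  · -- m2 lower bound
    have hr2 : r ^ 2 < r := by
      calc r ^ 2 = r * r := sq r
        _ < 1 * r := mul_lt_mul_of_pos_right hr1 hr
        _ = r := one_mul r
    have hr20 : 0 < r ^ 2 := by positivity
    -- step 1: global indicator integral is below m2
    have hlow1 : ∫⁻ x : EuclideanSpace ℝ (Fin d),
        (Ioo (r ^ 2) r).indicator (fun y =>
          ENNReal.ofReal (y ^ 2 * (c₁ * (y ^ (d + 2))⁻¹ * (Real.log (1 / y) ^ 2)⁻¹))) ‖x‖
        ≤ m2 d j r := by
      rw [m2, ← lintegral_indicator measurableSet_ball]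
      apply lintegral_mono
      intro x
      dsimp only
      by_cases hx : ‖x‖ ∈ Ioo (r ^ 2) r
      · rw [indicator_of_mem hx]
        have hxb : x ∈ ball (0 : EuclideanSpace ℝ (Fin d)) r := mem_ball_zero_iff.mpr hx.2
        rw [indicator_of_mem hxb]
        apply ENNReal.ofReal_le_ofReal
        have h0 : 0 < ‖x‖ := lt_trans hr20 hx.1
        exact mul_le_mul_of_nonneg_left
          (hjbound ‖x‖ h0 (le_trans hx.2.le hrδ)).1 (by positivity)
      · rw [indicator_of_notMem hx]
        exact zero_le
    -- step 2: evaluate the indicator integral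
    have hlow2 : ∫⁻ x : EuclideanSpace ℝ (Fin d),
        (Ioo (r ^ 2) r).indicator (fun y =>
          ENNReal.ofReal (y ^ 2 * (c₁ * (y ^ (d + 2))⁻¹ * (Real.log (1 / y) ^ 2)⁻¹))) ‖x‖
        = κ * (ENNReal.ofReal c₁ *
            ENNReal.ofReal ((-Real.log r)⁻¹ - (-Real.log (r ^ 2))⁻¹)) := by
      rw [red d hd _ (hgmmeas c₁) _ measurableSet_Ioo (fun y hy => hr20.trans hy.1), ← hκdef]
      congr 1
      rw [setLIntegral_congr_fun measurableSet_Ioo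
        (fun y hy => hpt2 c₁ hc₁.le y (lt_trans hr20 hy.1) (hy.2.trans hr1)),
        lintegral_const_mul _ hFmeas,
        Measure.restrict_congr_set Ioo_ae_eq_Ioc, lemA hr20 hr2 hr1]
    have hval : (-Real.log r)⁻¹ - (-Real.log (r ^ 2))⁻¹ = (1 / 2) * P⁻¹ := by
      have : Real.log (r ^ 2) = 2 * Real.log r := by
        rw [Real.log_pow]; push_cast; ring
      rw [this, hPdef]
      have hPne : P ≠ 0 := hP0.ne'
      rw [show -(2 * Real.log r) = 2 * P by rw [hPdef]; ring,
        show -Real.log r = P from rfl]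
      field_simp
      ring
    calc ENNReal.ofReal (K * c₁ / 2 * (Real.log (1 / r))⁻¹)
        = κ * (ENNReal.ofReal c₁ * ENNReal.ofReal ((1 / 2) * P⁻¹)) := by
          rw [← ENNReal.ofReal_mul hc₁.le, hκmul _ (by positivity), hlog1r]
          congr 1
          ring
      _ = ∫⁻ x : EuclideanSpace ℝ (Fin d),
            (Ioo (r ^ 2) r).indicator (fun y =>
              ENNReal.ofReal (y ^ 2 * (c₁ * (y ^ (d + 2))⁻¹ * (Real.log (1 / y) ^ 2)⁻¹))) ‖x‖ := by
          rw [hlow2, hval]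
      _ ≤ m2 d j r := hlow1
  · -- m2 upper bound
    have hup1 : m2 d j r ≤ ∫⁻ x : EuclideanSpace ℝ (Fin d),
        (Ioo (0:ℝ) r).indicator (fun y =>
          ENNReal.ofReal (y ^ 2 * (c₂ * (y ^ (d + 2))⁻¹ * (Real.log (1 / y) ^ 2)⁻¹))) ‖x‖ := by
      rw [m2]
      refine le_trans (lintegral_mono_ae ?_) (setLIntegral_le_lintegral _ _)
      refine ae_restrict_of_forall_mem measurableSet_ball ?_
      intro x hx
      rw [mem_ball_zero_iff] at hx
      rcases eq_or_lt_of_le (norm_nonneg x) with h0 | h0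
      · rw [← h0]
        simp
      · rw [indicator_of_mem (Set.mem_Ioo.mpr ⟨h0, hx⟩)]
        apply ENNReal.ofReal_le_ofReal
        exact mul_le_mul_of_nonneg_left
          (hjbound ‖x‖ h0 (hx.le.trans hrδ)).2 (by positivity)
    have hup2 : ∫⁻ x : EuclideanSpace ℝ (Fin d),
        (Ioo (0:ℝ) r).indicator (fun y =>
          ENNReal.ofReal (y ^ 2 * (c₂ * (y ^ (d + 2))⁻¹ * (Real.log (1 / y) ^ 2)⁻¹))) ‖x‖
        = κ * (ENNReal.ofReal c₂ *
            ∫⁻ y in Ioo (0:ℝ) r, ENNReal.ofReal ((y * Real.log y ^ 2)⁻¹)) := by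
      rw [red d hd _ (hgmmeas c₂) _ measurableSet_Ioo (fun y hy => hy.1), ← hκdef]
      congr 1
      rw [setLIntegral_congr_fun measurableSet_Ioo
        (fun y hy => hpt2 c₂ hc₂0 y hy.1 (hy.2.trans hr1)),
        lintegral_const_mul _ hFmeas]
    calc m2 d j r ≤ κ * (ENNReal.ofReal c₂ *
          ∫⁻ y in Ioo (0:ℝ) r, ENNReal.ofReal ((y * Real.log y ^ 2)⁻¹)) :=
        hup2 ▸ hup1
      _ ≤ κ * (ENNReal.ofReal c₂ * ENNReal.ofReal ((-Real.log r)⁻¹)) :=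
          mul_le_mul_right (mul_le_mul_right (lemA_sup hr hr1) _) _
      _ = ENNReal.ofReal (K * c₂ * (Real.log (1 / r))⁻¹) := by
          rw [← ENNReal.ofReal_mul hc₂0, hκmul _ (by positivity), hlog1r]
          rw [show -Real.log r = P from rfl]
          congr 1
          ring
  ----------------------------------------------------------------
  -- tail bounds
  ----------------------------------------------------------------
  constructor
  · -- tail lower bound
    have hlow1 : ∫⁻ x : EuclideanSpace ℝ (Fin d),
        (Ioo r δ₁).indicator (fun y =>
          ENNReal.ofReal (c₁ * (y ^ (d + 2))⁻¹ * (Real.log (1 / y) ^ 2)⁻¹)) ‖x‖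
        ≤ tailLam d j r := by
      rw [tailLam, ← lintegral_indicator measurableSet_ball.compl]
      apply lintegral_mono
      intro x
      dsimp only
      by_cases hx : ‖x‖ ∈ Ioo r δ₁
      · rw [indicator_of_mem hx]
        have hxb : x ∈ (ball (0 : EuclideanSpace ℝ (Fin d)) r)ᶜ := by
          simp only [mem_compl_iff, mem_ball_zero_iff, not_lt]
          exact hx.1.le
        rw [indicator_of_mem hxb]
        exact ENNReal.ofReal_le_ofReal
          (hjbound ‖x‖ (hr.trans hx.1) (hx.2.le.trans hδ₁δ)).1
      · rw [indicator_of_notMem hx]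
        exact zero_le
    have hlow2 : ∫⁻ x : EuclideanSpace ℝ (Fin d),
        (Ioo r δ₁).indicator (fun y =>
          ENNReal.ofReal (c₁ * (y ^ (d + 2))⁻¹ * (Real.log (1 / y) ^ 2)⁻¹)) ‖x‖
        = κ * (ENNReal.ofReal c₁ *
            ∫⁻ y in Ioc r δ₁, ENNReal.ofReal ((y ^ 3 * Real.log y ^ 2)⁻¹)) := by
      rw [red d hd _ (hgtmeas c₁) _ measurableSet_Ioo (fun y hy => hr.trans hy.1), ← hκdef]
      congr 1
      rw [setLIntegral_congr_fun measurableSet_Ioo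
        (fun y hy => hptt c₁ hc₁.le y (hr.trans hy.1) (hy.2.trans hδ₁1)),
        lintegral_const_mul _ hHmeas,
        Measure.restrict_congr_set Ioo_ae_eq_Ioc]
    have hlB := (lemB hr hrδ₁ hδ₁e).1
    calc ENNReal.ofReal (K * c₁ / 4 * (r ^ 2)⁻¹ * (Real.log (1 / r) ^ 2)⁻¹)
        ≤ κ * (ENNReal.ofReal c₁ * ENNReal.ofReal ((Gr - Gδ) / 2)) := by
          rw [← ENNReal.ofReal_mul hc₁.le, hκmul _ (mul_nonneg hc₁.le (by linarith))]
          apply ENNReal.ofReal_le_ofReal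
          have h1 : Gr / 4 ≤ (Gr - Gδ) / 2 := by linarith
          have h2 : K * c₁ / 4 * (r ^ 2)⁻¹ * (Real.log (1 / r) ^ 2)⁻¹
              = K * (c₁ * (Gr / 4)) := by
            rw [hGrform]; ring
          rw [h2]
          have h3 := mul_le_mul_of_nonneg_left h1 hc₁.le
          exact mul_le_mul_of_nonneg_left h3 hK.le
      _ ≤ κ * (ENNReal.ofReal c₁ *
            ∫⁻ y in Ioc r δ₁, ENNReal.ofReal ((y ^ 3 * Real.log y ^ 2)⁻¹)) :=
          mul_le_mul_right (mul_le_mul_right hlB _) _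
      _ = ∫⁻ x : EuclideanSpace ℝ (Fin d),
            (Ioo r δ₁).indicator (fun y =>
              ENNReal.ofReal (c₁ * (y ^ (d + 2))⁻¹ * (Real.log (1 / y) ^ 2)⁻¹)) ‖x‖ :=
          hlow2.symm
      _ ≤ tailLam d j r := hlow1
  · -- tail upper bound
    have hsplit : tailLam d j r ≤
        (∫⁻ x in ball (0 : EuclideanSpace ℝ (Fin d)) δ₁ \
            ball (0 : EuclideanSpace ℝ (Fin d)) r, ENNReal.ofReal (j ‖x‖)) +
        ∫⁻ x in (ball (0 : EuclideanSpace ℝ (Fin d)) δ₁)ᶜ, ENNReal.ofReal (j ‖x‖) := by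
      rw [tailLam]
      have hsub : (ball (0 : EuclideanSpace ℝ (Fin d)) r)ᶜ ⊆
          (ball (0 : EuclideanSpace ℝ (Fin d)) δ₁ \
            ball (0 : EuclideanSpace ℝ (Fin d)) r) ∪
          (ball (0 : EuclideanSpace ℝ (Fin d)) δ₁)ᶜ := by
        intro x hx
        by_cases h : x ∈ ball (0 : EuclideanSpace ℝ (Fin d)) δ₁
        · exact Or.inl ⟨h, hx⟩
        · exact Or.inr h
      exact le_trans (lintegral_mono' (Measure.restrict_mono hsub le_rfl) le_rfl)
        (lintegral_union_le _ _ _)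
    -- part 1 : annulus
    have hpart1 : ∫⁻ x in ball (0 : EuclideanSpace ℝ (Fin d)) δ₁ \
          ball (0 : EuclideanSpace ℝ (Fin d)) r, ENNReal.ofReal (j ‖x‖)
        ≤ ENNReal.ofReal (K * c₂ * Gr) := by
      have h1 : ∫⁻ x in ball (0 : EuclideanSpace ℝ (Fin d)) δ₁ \
            ball (0 : EuclideanSpace ℝ (Fin d)) r, ENNReal.ofReal (j ‖x‖)
          ≤ ∫⁻ x : EuclideanSpace ℝ (Fin d),
            (Ico r δ₁).indicator (fun y =>
              ENNReal.ofReal (c₂ * (y ^ (d + 2))⁻¹ * (Real.log (1 / y) ^ 2)⁻¹)) ‖x‖ := by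
        refine le_trans (lintegral_mono_ae ?_) (setLIntegral_le_lintegral _ _)
        refine ae_restrict_of_forall_mem (measurableSet_ball.diff measurableSet_ball) ?_
        intro x hx
        obtain ⟨hx1, hx2⟩ := hx
        rw [mem_ball_zero_iff] at hx1
        have hx2' : r ≤ ‖x‖ := by
          simpa [mem_ball_zero_iff, not_lt] using hx2
        rw [indicator_of_mem (Set.mem_Ico.mpr ⟨hx2', hx1⟩)]
        exact ENNReal.ofReal_le_ofReal
          (hjbound ‖x‖ (hr.trans_le hx2') (hx1.le.trans hδ₁δ)).2
      have h2 : ∫⁻ x : EuclideanSpace ℝ (Fin d),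
            (Ico r δ₁).indicator (fun y =>
              ENNReal.ofReal (c₂ * (y ^ (d + 2))⁻¹ * (Real.log (1 / y) ^ 2)⁻¹)) ‖x‖
          = κ * (ENNReal.ofReal c₂ *
            ∫⁻ y in Ioc r δ₁, ENNReal.ofReal ((y ^ 3 * Real.log y ^ 2)⁻¹)) := by
        rw [red d hd _ (hgtmeas c₂) _ measurableSet_Ico (fun y hy => lt_of_lt_of_le hr hy.1),
          ← hκdef]
        congr 1
        rw [setLIntegral_congr_fun measurableSet_Ico
          (fun y hy => hptt c₂ hc₂0 y (hr.trans_le hy.1) (hy.2.trans hδ₁1)),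
          lintegral_const_mul _ hHmeas,
          Measure.restrict_congr_set Ico_ae_eq_Ioc]
      calc ∫⁻ x in ball (0 : EuclideanSpace ℝ (Fin d)) δ₁ \
            ball (0 : EuclideanSpace ℝ (Fin d)) r, ENNReal.ofReal (j ‖x‖)
          ≤ κ * (ENNReal.ofReal c₂ *
            ∫⁻ y in Ioc r δ₁, ENNReal.ofReal ((y ^ 3 * Real.log y ^ 2)⁻¹)) := h2 ▸ h1
        _ ≤ κ * (ENNReal.ofReal c₂ * ENNReal.ofReal Gr) :=
            mul_le_mul_right (mul_le_mul_right (lemB hr hrδ₁ hδ₁e).2 _) _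
        _ = ENNReal.ofReal (K * c₂ * Gr) := by
            rw [← ENNReal.ofReal_mul hc₂0, hκmul _ (by positivity), mul_assoc]
    -- part 2 : far tail
    have hpart2 : ∫⁻ x in (ball (0 : EuclideanSpace ℝ (Fin d)) δ₁)ᶜ,
        ENNReal.ofReal (j ‖x‖) ≤ ENNReal.ofReal C := by
      have hmin0 : 0 < min 1 (δ₁ ^ 2) := lt_min one_pos (by positivity)
      have h1 : ∫⁻ x in (ball (0 : EuclideanSpace ℝ (Fin d)) δ₁)ᶜ,
          ENNReal.ofReal (j ‖x‖)
          ≤ ∫⁻ x in (ball (0 : EuclideanSpace ℝ (Fin d)) δ₁)ᶜ,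
            ENNReal.ofReal ((min 1 (δ₁ ^ 2))⁻¹) *
              ENNReal.ofReal (min 1 (‖x‖ ^ 2) * j ‖x‖) := by
        apply lintegral_mono_ae
        refine ae_restrict_of_forall_mem measurableSet_ball.compl ?_
        intro x hx
        have hxδ : δ₁ ≤ ‖x‖ := by
          simpa [mem_ball_zero_iff, not_lt] using hx
        have hx0 : 0 < ‖x‖ := hδ₁0.trans_le hxδ
        have hj0 : 0 ≤ j ‖x‖ := hnonneg _ hx0
        rw [← ENNReal.ofReal_mul (by positivity)]
        apply ENNReal.ofReal_le_ofReal
        have hminle : min 1 (δ₁ ^ 2) ≤ min 1 (‖x‖ ^ 2) :=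
          min_le_min le_rfl (pow_le_pow_left₀ hδ₁0.le hxδ 2)
        have := mul_le_mul_of_nonneg_right hminle hj0
        calc j ‖x‖ = (min 1 (δ₁ ^ 2))⁻¹ * (min 1 (δ₁ ^ 2) * j ‖x‖) := by
              field_simp
          _ ≤ (min 1 (δ₁ ^ 2))⁻¹ * (min 1 (‖x‖ ^ 2) * j ‖x‖) := by
              apply mul_le_mul_of_nonneg_left _ (by positivity)
              exact this
      calc ∫⁻ x in (ball (0 : EuclideanSpace ℝ (Fin d)) δ₁)ᶜ, ENNReal.ofReal (j ‖x‖)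
          ≤ ∫⁻ x in (ball (0 : EuclideanSpace ℝ (Fin d)) δ₁)ᶜ,
              ENNReal.ofReal ((min 1 (δ₁ ^ 2))⁻¹) *
                ENNReal.ofReal (min 1 (‖x‖ ^ 2) * j ‖x‖) := h1
        _ = ENNReal.ofReal ((min 1 (δ₁ ^ 2))⁻¹) *
              ∫⁻ x in (ball (0 : EuclideanSpace ℝ (Fin d)) δ₁)ᶜ,
                ENNReal.ofReal (min 1 (‖x‖ ^ 2) * j ‖x‖) :=
            lintegral_const_mul' _ _ ENNReal.ofReal_ne_top
        _ ≤ ENNReal.ofReal ((min 1 (δ₁ ^ 2))⁻¹) *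
              ∫⁻ x : EuclideanSpace ℝ (Fin d),
                ENNReal.ofReal (min 1 (‖x‖ ^ 2) * j ‖x‖) :=
            mul_le_mul_right (setLIntegral_le_lintegral _ _) _
        _ = M := hMdef.symm ▸ rfl
        _ = ENNReal.ofReal C := hMC
    calc tailLam d j r ≤ _ := hsplit
      _ ≤ ENNReal.ofReal (K * c₂ * Gr) + ENNReal.ofReal C := add_le_add hpart1 hpart2
      _ = ENNReal.ofReal (K * c₂ * Gr + C) := by
          rw [ENNReal.ofReal_add (by positivity) hC0]
      _ ≤ ENNReal.ofReal ((K * c₂ + C) * (r ^ 2)⁻¹ * (Real.log (1 / r) ^ 2)⁻¹) := by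
          apply ENNReal.ofReal_le_ofReal
          have h1 : (K * c₂ + C) * (r ^ 2)⁻¹ * (Real.log (1 / r) ^ 2)⁻¹
              = (K * c₂ + C) * Gr := by rw [hGrform]; ring
          rw [h1]
          have h2 : C * 1 ≤ C * Gr := mul_le_mul_of_nonneg_left hGr1 hC0
          have h3 : 0 ≤ K * c₂ := by positivity
          have h4 := mul_le_mul_of_nonneg_left hGr1 h3
          linarith
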